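/- Given a set X, let [X⁺]_ω = {[u]_m : u ∈ X⁺, 1 ≤ m ≤ |u|} with operations [u]_m ⊢ [v]_n = [uv]_{|u|+n} and [u]_m ⊣ [v]_n = [uv]_m. Then [X⁺]_ω is the free disemigroup on X: it is a disemigroup, and for every disemigroup D and map f : X → D there is a unique disemigroup homomorphism [X⁺]_ω → D extending f (where x corresponds to [x]_1). -/

import Mathlib

/-- A disemigroup: two associative operations `l` (⊢) and `r` (⊣)
satisfying the dialgebra axioms. -/
structure DisemigroupStruct (D : Type) where
  l : D → D → D
  r : D → D → D
  l_assoc : ∀ a b c, l (l a b) c = l a (l b c)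
  r_assoc : ∀ a b c, r (r a b) c = r a (r b c)
  ax1 : ∀ a b c, r a (l b c) = r a (r b c)
  ax2 : ∀ a b c, l (r a b) c = l (l a b) c
  ax3 : ∀ a b c, l a (r b c) = r (l a b) c

/-- A digroup: a disemigroup with a bar-unit `one` and inverses. -/
structure DigroupStruct (D : Type) extends DisemigroupStruct D where
  one : D
  inv : D → D
  one_l : ∀ a, l one a = a
  r_one : ∀ a, r a one = a
  l_inv : ∀ a, l a (inv a) = one
  inv_r : ∀ a, r (inv a) a = one

def IsDisemigroupHom {A B : Type} (G : DisemigroupStruct A) (H : DisemigroupStruct B)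
    (f : A → B) : Prop :=
  (∀ a b, f (G.l a b) = H.l (f a) (f b)) ∧ (∀ a b, f (G.r a b) = H.r (f a) (f b))

def IsDigroupHom {A B : Type} (G : DigroupStruct A) (H : DigroupStruct B)
    (f : A → B) : Prop :=
  (∀ a b, f (G.l a b) = H.l (f a) (f b)) ∧ (∀ a b, f (G.r a b) = H.r (f a) (f b)) ∧
  f G.one = H.one

/-- The group part J = {a ⊢ 1 : a ∈ G}. -/
def groupPart {A : Type} (G : DigroupStruct A) : Set A := {a | ∃ b, a = G.l b G.one}

/-- The halo: the set of bar-units. -/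
def halo {A : Type} (G : DigroupStruct A) : Set A := {e | ∀ a, G.l e a = a ∧ G.r a e = a}

/-- `(D, g1, g2)` is a free product (coproduct) of the digroups `D1`, `D2`. -/
def IsFreeProduct {A1 A2 B : Type} (D1 : DigroupStruct A1) (D2 : DigroupStruct A2)
    (D : DigroupStruct B) (g1 : A1 → B) (g2 : A2 → B) : Prop :=
  IsDigroupHom D1 D g1 ∧ IsDigroupHom D2 D g2 ∧
  ∀ {C : Type} (G : DigroupStruct C) (f1 : A1 → C) (f2 : A2 → C),
    IsDigroupHom D1 G f1 → IsDigroupHom D2 G f2 →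
    ∃! φ : B → C, IsDigroupHom D G φ ∧ φ ∘ g1 = f1 ∧ φ ∘ g2 = f2

/-- The free disemigroup `[X⁺]_ω` on `X`: pairs `[u]_m` with `u` a nonempty word
and `1 ≤ m ≤ |u|`. -/
def FreeDi (X : Type) : Type :=
  {p : List X × ℕ // p.1 ≠ [] ∧ 1 ≤ p.2 ∧ p.2 ≤ p.1.length}

/-- `[u]_m ⊢ [v]_n = [uv]_{|u|+n}`. -/
def FreeDi.opL {X : Type} (a b : FreeDi X) : FreeDi X :=
  ⟨(a.val.1 ++ b.val.1, a.val.1.length + b.val.2), by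
    obtain ⟨ha, ha1, ha2⟩ := a.property
    obtain ⟨hb, hb1, hb2⟩ := b.property
    refine ⟨?_, by omega, ?_⟩
    · simp [List.append_eq_nil_iff, ha]
    · simp only [List.length_append]; omega⟩

/-- `[u]_m ⊣ [v]_n = [uv]_m`. -/
def FreeDi.opR {X : Type} (a b : FreeDi X) : FreeDi X :=
  ⟨(a.val.1 ++ b.val.1, a.val.2), by
    obtain ⟨ha, ha1, ha2⟩ := a.property
    obtain ⟨hb, hb1, hb2⟩ := b.property
    refine ⟨?_, by omega, ?_⟩
    · simp [List.append_eq_nil_iff, ha]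
    · simp only [List.length_append]; omega⟩

/-- The generator `[x]₁`. -/
def FreeDi.single {X : Type} (x : X) : FreeDi X := ⟨([x], 1), by simp⟩


namespace FreeDiAux

variable {D : Type} (T : DisemigroupStruct D)

lemma foldl_l_congr : ∀ (xs : List D) {d d' : D}, (∀ w, T.l d w = T.l d' w) →
    ∀ w, T.l (xs.foldl T.l d) w = T.l (xs.foldl T.l d') w
  | [], _, _, h, w => h w
  | x :: xs, d, d', h, w => by
      simp only [List.foldl_cons]
      exact foldl_l_congr xs (fun v => by rw [T.l_assoc, T.l_assoc, h]) w

lemma foldl_r_to_l : ∀ (xs : List D) (d w : D),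
    T.l (xs.foldl T.r d) w = T.l (xs.foldl T.l d) w
  | [], _, _ => rfl
  | x :: xs, d, w => by
      simp only [List.foldl_cons]
      rw [foldl_r_to_l xs]
      exact foldl_l_congr T xs (fun v => by rw [T.ax2]) w

lemma l_foldl_l : ∀ (xs : List D) (x d : D),
    T.l x (xs.foldl T.l d) = xs.foldl T.l (T.l x d)
  | [], _, _ => rfl
  | y :: xs, x, d => by
      simp only [List.foldl_cons]
      rw [l_foldl_l xs, T.l_assoc]

lemma l_foldl_r : ∀ (xs : List D) (x d : D),
    T.l x (xs.foldl T.r d) = xs.foldl T.r (T.l x d)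
  | [], _, _ => rfl
  | y :: xs, x, d => by
      simp only [List.foldl_cons]
      rw [l_foldl_r xs, T.ax3]

lemma r_foldl_r : ∀ (xs : List D) (x d : D),
    T.r x (xs.foldl T.r d) = xs.foldl T.r (T.r x d)
  | [], _, _ => rfl
  | y :: xs, x, d => by
      simp only [List.foldl_cons]
      rw [r_foldl_r xs, T.r_assoc]

lemma r_foldl_l : ∀ (xs : List D) (x d : D),
    T.r x (xs.foldl T.l d) = xs.foldl T.r (T.r x d)
  | [], _, _ => rfl
  | y :: xs, x, d => by
      simp only [List.foldl_cons]
      rw [r_foldl_l xs, T.ax1, T.r_assoc]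

variable {X : Type} (f : X → D)

/-- Interpretation of the element `[x :: xs]_{k+1}` in `D`. -/
def phiAux (x : X) (xs : List X) (k : ℕ) : D :=
  List.foldl T.r (List.foldl T.l (f x) ((xs.take k).map f)) ((xs.drop k).map f)

lemma phiAux_l_w (x : X) (xs : List X) (k : ℕ) (w : D) :
    T.l (phiAux T f x xs k) w = T.l (List.foldl T.l (f x) (xs.map f)) w := by
  unfold phiAux
  rw [foldl_r_to_l, ← List.foldl_append, ← List.map_append, List.take_append_drop]

lemma phiAux_opL (x y : X) (xs ys : List X) (k n : ℕ) :
    phiAux T f x (xs ++ y :: ys) (xs.length + 1 + n) =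
      T.l (phiAux T f x xs k) (phiAux T f y ys n) := by
  simp only [phiAux]
  rw [l_foldl_r T, l_foldl_l T, foldl_r_to_l T, ← List.foldl_append, ← List.map_append,
    List.take_append_drop]
  have ht : (xs ++ y :: ys).take (xs.length + 1 + n) = xs ++ y :: ys.take n := by
    rw [List.take_append]
    congr 1
    · rw [List.take_of_length_le (by omega)]
    · have : xs.length + 1 + n - xs.length = n + 1 := by omega
      rw [this]; rfl
  have hd : (xs ++ y :: ys).drop (xs.length + 1 + n) = ys.drop n := by
    rw [List.drop_append, List.drop_of_length_le (by omega)]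
    have : xs.length + 1 + n - xs.length = n + 1 := by omega
    rw [this]; rfl
  rw [ht, hd]
  congr 1
  simp [List.foldl_append]

lemma phiAux_opR (x y : X) (xs ys : List X) (k n : ℕ) (hk : k ≤ xs.length) :
    phiAux T f x (xs ++ y :: ys) k =
      T.r (phiAux T f x xs k) (phiAux T f y ys n) := by
  simp only [phiAux]
  rw [r_foldl_r T, r_foldl_l T, ← List.foldl_append, ← List.map_append, List.take_append_drop]
  have ht : (xs ++ y :: ys).take k = xs.take k := by
    rw [List.take_append, Nat.sub_eq_zero_of_le hk, List.take_zero,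
      List.append_nil]
  have hd : (xs ++ y :: ys).drop k = xs.drop k ++ y :: ys := by
    rw [List.drop_append, Nat.sub_eq_zero_of_le hk, List.drop_zero]
  rw [ht, hd]
  simp only [List.map_append, List.map_cons, List.foldl_append, List.foldl_cons]

end FreeDiAux

/-- `[X⁺]_ω` with the operations `[u]_m ⊢ [v]_n = [uv]_{|u|+n}`,
`[u]_m ⊣ [v]_n = [uv]_m` is the free disemigroup on `X`. -/
def freeDiS (X : Type) : DisemigroupStruct (FreeDi X) where
  l := FreeDi.opL
  r := FreeDi.opR
  l_assoc a b c := Subtype.ext (by simp [FreeDi.opL]; omega)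
  r_assoc a b c := Subtype.ext (by simp [FreeDi.opR])
  ax1 a b c := Subtype.ext (by simp [FreeDi.opR, FreeDi.opL])
  ax2 a b c := Subtype.ext (by simp [FreeDi.opR, FreeDi.opL])
  ax3 a b c := Subtype.ext (by simp [FreeDi.opR, FreeDi.opL])

theorem freeDi_is_free_disemigroup {X : Type} :
    ∃ S : DisemigroupStruct (FreeDi X),
      S.l = FreeDi.opL ∧ S.r = FreeDi.opR ∧
      ∀ {D : Type} (T : DisemigroupStruct D) (f : X → D),
        ∃! φ : FreeDi X → D,
          IsDisemigroupHom S T φ ∧ ∀ x, φ (FreeDi.single x) = f x := by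
  refine ⟨freeDiS X, rfl, rfl, ?_⟩
  intro D T f
  let Φ : FreeDi X → D := fun a =>
    FreeDiAux.phiAux T f (a.val.1.head a.property.1) a.val.1.tail (a.val.2 - 1)
  have homL : ∀ a b, Φ (FreeDi.opL a b) = T.l (Φ a) (Φ b) := by
    rintro ⟨⟨u, m⟩, hu, h1, h2⟩ ⟨⟨v, n⟩, hv, g1, g2⟩
    obtain _ | ⟨x, xs⟩ := u
    · exact absurd rfl hu
    obtain _ | ⟨y, ys⟩ := v
    · exact absurd rfl hv
    show FreeDiAux.phiAux T f x (xs ++ y :: ys) ((x :: xs).length + n - 1) =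
      T.l (FreeDiAux.phiAux T f x xs (m - 1)) (FreeDiAux.phiAux T f y ys (n - 1))
    have e : (x :: xs).length + n - 1 = xs.length + 1 + (n - 1) := by
      simp only [List.length_cons]; omega
    rw [e]
    exact FreeDiAux.phiAux_opL T f x y xs ys (m - 1) (n - 1)
  have homR : ∀ a b, Φ (FreeDi.opR a b) = T.r (Φ a) (Φ b) := by
    rintro ⟨⟨u, m⟩, hu, h1, h2⟩ ⟨⟨v, n⟩, hv, g1, g2⟩
    obtain _ | ⟨x, xs⟩ := u
    · exact absurd rfl hu
    obtain _ | ⟨y, ys⟩ := v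
    · exact absurd rfl hv
    show FreeDiAux.phiAux T f x (xs ++ y :: ys) (m - 1) =
      T.r (FreeDiAux.phiAux T f x xs (m - 1)) (FreeDiAux.phiAux T f y ys (n - 1))
    exact FreeDiAux.phiAux_opR T f x y xs ys (m - 1) (n - 1)
      (by simp only [List.length_cons] at h2; omega)
  have hsingle : ∀ x, Φ (FreeDi.single x) = f x := fun x => rfl
  refine ⟨Φ, ⟨⟨homL, homR⟩, hsingle⟩, ?_⟩
  rintro ψ ⟨⟨hl, hr⟩, hs⟩
  have hl' : ∀ a b, ψ (FreeDi.opL a b) = T.l (ψ a) (ψ b) := hl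
  have hr' : ∀ a b, ψ (FreeDi.opR a b) = T.r (ψ a) (ψ b) := hr
  funext a
  suffices H : ∀ (N : ℕ) (a : FreeDi X), a.val.1.length ≤ N → ψ a = Φ a from H _ a le_rfl
  intro N
  induction N with
  | zero =>
    intro a h
    exact absurd (List.length_eq_zero_iff.mp (Nat.le_zero.mp h)) a.property.1
  | succ N ih =>
    rintro ⟨⟨u, m⟩, hu, h1, h2⟩ ha
    obtain _ | ⟨x, _ | ⟨y, ys⟩⟩ := u
    · exact absurd rfl hu
    · have hm : m = 1 := by simp only [List.length_cons, List.length_nil] at h2; omega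
      subst hm
      have hab : (⟨([x], 1), ⟨hu, h1, h2⟩⟩ : FreeDi X) = FreeDi.single x :=
        Subtype.ext rfl
      rw [hab, hs x, hsingle x]
    · simp only [List.length_cons] at h2 ha
      rcases Nat.lt_or_ge m 2 with hm | hm
      · have hm1 : m = 1 := by omega
        subst hm1
        set b : FreeDi X := ⟨(y :: ys, 1), by simp⟩ with hbdef
        have hab : (⟨(x :: y :: ys, 1), ⟨hu, h1, h2⟩⟩ : FreeDi X) =
            FreeDi.opR (FreeDi.single x) b :=
          Subtype.ext (by simp [FreeDi.opR, FreeDi.single, hbdef])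
        rw [hab, hr', homR, hs x, hsingle x, ih b (by simp [hbdef]; omega)]
      · set b : FreeDi X := ⟨(y :: ys, m - 1), ⟨by simp, by omega, by simp only [List.length_cons]; omega⟩⟩ with hbdef
        have hab : (⟨(x :: y :: ys, m), ⟨hu, h1, h2⟩⟩ : FreeDi X) =
            FreeDi.opL (FreeDi.single x) b :=
          Subtype.ext (by simp [FreeDi.opL, FreeDi.single, hbdef]; omega)
        rw [hab, hl', homL, hs x, hsingle x, ih b (by simp [hbdef]; omega)]
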